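/- Let p be an odd prime. There is no subset S of ℤ/p²ℤ whose difference set {x - y : x, y ∈ S, x ≠ y} equals exactly the set of elements of ℤ/p²ℤ that are coprime to p (each such element appearing as a difference). -/

import Mathlib

theorem stmt_11 (p : ℕ) (hp : p.Prime) (hodd : Odd p) :
    ¬ ∃ S : Set (ZMod (p ^ 2)),
        {d : ZMod (p ^ 2) | ∃ x ∈ S, ∃ y ∈ S, x ≠ y ∧ x - y = d} =
          {d : ZMod (p ^ 2) | IsUnit d} := by
  classical
  rintro ⟨S, hS⟩
  haveI : Fact p.Prime := ⟨hp⟩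
  haveI hne : NeZero (p ^ 2) := ⟨pow_ne_zero 2 hp.pos.ne'⟩
  set f : ZMod (p ^ 2) →+* ZMod p := ZMod.castHom (dvd_pow_self p two_ne_zero) (ZMod p)
    with hf_def
  -- differences of distinct elements of S are units
  have hdiff : ∀ x ∈ S, ∀ y ∈ S, x ≠ y → IsUnit (x - y) := by
    intro x hx y hy hxy
    have : (x - y) ∈ {d : ZMod (p ^ 2) | IsUnit d} := hS ▸ ⟨x, hx, y, hy, hxy, rfl⟩
    exact this
  have hunit : ∀ d : ZMod (p ^ 2), IsUnit d → ∃ x ∈ S, ∃ y ∈ S, x ≠ y ∧ x - y = d := by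
    intro d hd
    have : d ∈ {d : ZMod (p ^ 2) | ∃ x ∈ S, ∃ y ∈ S, x ≠ y ∧ x - y = d} := hS ▸ hd
    exact this
  -- f is injective on S
  have hfinj : Set.InjOn f S := by
    intro x hx y hy hxy
    by_contra hne'
    have hu : IsUnit (f (x - y)) := (hdiff x hx y hy hne').map f
    rw [map_sub, hxy, sub_self] at hu
    exact not_isUnit_zero hu
  -- S is finite
  have hSfin : S.Finite := Set.Finite.of_finite_image (Set.toFinite (f '' S)) hfinj
  set T : Finset (ZMod (p ^ 2)) := hSfin.toFinset with hT_def
  have hTmem : ∀ x, x ∈ T ↔ x ∈ S := fun x => hSfin.mem_toFinset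
  have hfinjT : Set.InjOn f T := fun x hx y hy h =>
    hfinj ((hTmem x).mp hx) ((hTmem y).mp hy) h
  -- card bound
  have hTle : T.card ≤ p := by
    have := Finset.card_le_card_of_injOn f (fun a _ => Finset.mem_univ (f a)) hfinjT
    simpa [ZMod.card] using this
  -- the units finset
  set D : Finset (ZMod (p ^ 2)) := Finset.univ.filter IsUnit with hD_def
  have hDcard : D.card = p * (p - 1) := by
    have h1 : D.card = Fintype.card (ZMod (p ^ 2))ˣ := by
      rw [Fintype.card, ← Finset.card_map ⟨(Units.val), fun _ _ => Units.ext⟩]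
      congr 1
      ext a
      simp only [hD_def, Finset.mem_filter, Finset.mem_univ, true_and, Finset.mem_map,
        Function.Embedding.coeFn_mk, IsUnit]
      exact Iff.rfl
    rw [h1, ZMod.card_units_eq_totient, Nat.totient_prime_pow hp (by norm_num : 0 < 2)]
    ring
  -- every unit is a difference from T.offDiag
  have hsurjD : ∀ d ∈ D, ∃ q ∈ T.offDiag, q.1 - q.2 = d := by
    intro d hd
    obtain ⟨x, hx, y, hy, hxy, hxyd⟩ := hunit d (by simpa [hD_def] using hd)
    exact ⟨(x, y), Finset.mem_offDiag.mpr ⟨(hTmem x).mpr hx, (hTmem y).mpr hy, hxy⟩, hxyd⟩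
  have hoffmem : ∀ q ∈ T.offDiag, q.1 - q.2 ∈ D := by
    intro q hq
    obtain ⟨h1, h2, h3⟩ := Finset.mem_offDiag.mp hq
    simp only [hD_def, Finset.mem_filter, Finset.mem_univ, true_and]
    exact hdiff q.1 ((hTmem _).mp h1) q.2 ((hTmem _).mp h2) h3
  have hDleoff : D.card ≤ T.offDiag.card :=
    Finset.card_le_card_of_surjOn (fun q => q.1 - q.2)
      (fun d hd => by obtain ⟨q, hq, hqd⟩ := hsurjD d hd; exact ⟨q, hq, hqd⟩)
  -- T.card = p
  have hDcard' : D.card = p * p - p := by rw [hDcard, Nat.mul_sub_one]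
  have hoc : T.offDiag.card = T.card * T.card - T.card := Finset.offDiag_card (s := T)
  have hTcard : T.card = p := by
    have h1 : p * p - p ≤ T.card * T.card - T.card := hDcard' ▸ hoc ▸ hDleoff
    refine le_antisymm hTle ?_
    by_contra hlt
    push_neg at hlt
    have h2 : T.card * T.card - T.card ≤ (p - 1) * (p - 1) :=
      le_trans (Nat.sub_le _ _) (Nat.mul_le_mul (by omega) (by omega))
    have h3 : p * p - p ≤ (p - 1) * (p - 1) := h1.trans h2
    obtain ⟨k, rfl⟩ : ∃ k, p = k + 2 := ⟨p - 2, by have := hp.two_le; omega⟩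
    have e1 : (k + 2) * (k + 2) = k * k + 4 * k + 4 := by ring
    have e2 : (k + 2 - 1) * (k + 2 - 1) = k * k + 2 * k + 1 := by
      have : k + 2 - 1 = k + 1 := rfl
      rw [this]; ring
    omega
  -- difference map is injective on T.offDiag
  have hsubinj : ∀ q₁ ∈ T.offDiag, ∀ q₂ ∈ T.offDiag,
      q₁.1 - q₁.2 = q₂.1 - q₂.2 → q₁ = q₂ := by
    have hcard : T.offDiag.card ≤ D.card := by rw [hoc, hTcard, hDcard']
    have H := Finset.inj_on_of_surj_on_of_card_le (s := T.offDiag) (t := D)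
      (fun q _ => q.1 - q.2) (fun q hq => hoffmem q hq)
      (fun d hd => by obtain ⟨q, hq, hqd⟩ := hsurjD d hd; exact ⟨q, hq, hqd⟩) hcard
    intro q₁ h₁ q₂ h₂ h
    exact H h₁ h₂ h
  -- f maps T onto ZMod p
  have hfsurj : ∀ r : ZMod p, ∃ x ∈ T, f x = r := by
    have himg : T.image f = Finset.univ := by
      apply Finset.eq_univ_of_card
      rw [Finset.card_image_of_injOn hfinjT, hTcard, ZMod.card]
    intro r
    have : r ∈ T.image f := by rw [himg]; exact Finset.mem_univ r
    obtain ⟨x, hx, hxr⟩ := Finset.mem_image.mp this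
    exact ⟨x, hx, hxr⟩
  -- kernel of f is multiples of p
  have hfval : ∀ d : ZMod (p ^ 2), f d = ((d.val : ℕ) : ZMod p) := by
    intro d
    have : d = ((d.val : ℕ) : ZMod (p ^ 2)) := (ZMod.natCast_zmod_val d).symm
    conv_lhs => rw [this]
    rw [map_natCast]
  have hker : ∀ d : ZMod (p ^ 2), f d = 0 → ∃ c : ZMod (p ^ 2), d = (p : ZMod (p ^ 2)) * c := by
    intro d hd
    rw [hfval] at hd
    obtain ⟨m, hm⟩ := (ZMod.natCast_eq_zero_iff _ _).mp hd
    refine ⟨(m : ZMod (p ^ 2)), ?_⟩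
    rw [← Nat.cast_mul, ← hm, ZMod.natCast_zmod_val]
  have hpp : (p : ZMod (p ^ 2)) * (p : ZMod (p ^ 2)) = 0 := by
    rw [← Nat.cast_mul]
    rw [ZMod.natCast_eq_zero_iff]
    rw [pow_two]
  -- elements with f d = 1 are units
  have hU1unit : ∀ d : ZMod (p ^ 2), f d = 1 → IsUnit d := by
    intro d hd1
    have h0 : f (d - 1) = 0 := by rw [map_sub, map_one, hd1, sub_self]
    obtain ⟨c, hc⟩ := hker _ h0
    have hd : d = 1 + (p : ZMod (p ^ 2)) * c := by rw [← hc]; ring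
    refine IsUnit.of_mul_eq_one (a := d) (1 - (p : ZMod (p ^ 2)) * c) ?_
    rw [hd]
    have expand : (1 + (p : ZMod (p ^ 2)) * c) * (1 - (p : ZMod (p ^ 2)) * c)
        = 1 - ((p : ZMod (p ^ 2)) * (p : ZMod (p ^ 2))) * (c * c) := by ring
    rw [expand, hpp, zero_mul, sub_zero]
  -- the fiber over 1 and the corresponding pairs
  set U₁ : Finset (ZMod (p ^ 2)) := Finset.univ.filter (fun d => f d = 1) with hU₁_def
  set P₁ : Finset (ZMod (p ^ 2) × ZMod (p ^ 2)) :=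
    T.offDiag.filter (fun q => f q.1 = f q.2 + 1) with hP₁_def
  have hP₁off : ∀ q ∈ P₁, q ∈ T.offDiag := fun q hq => (Finset.mem_filter.mp hq).1
  -- sum over U₁ equals sum of differences over P₁
  have hsum1 : ∑ q ∈ P₁, (q.1 - q.2) = ∑ d ∈ U₁, d := by
    refine Finset.sum_bij (fun q _ => q.1 - q.2) ?_ ?_ ?_ ?_
    · intro q hq
      obtain ⟨hq1, hq2⟩ := Finset.mem_filter.mp hq
      simp only [hU₁_def, Finset.mem_filter, Finset.mem_univ, true_and]
      rw [map_sub, hq2]; ring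
    · intro q₁ h₁ q₂ h₂ h
      exact hsubinj q₁ (hP₁off _ h₁) q₂ (hP₁off _ h₂) h
    · intro d hd
      have hd1 : f d = 1 := (Finset.mem_filter.mp hd).2
      obtain ⟨q, hq, hqd⟩ := hsurjD d (by
        simp only [hD_def, Finset.mem_filter, Finset.mem_univ, true_and]
        exact hU1unit d hd1)
      refine ⟨q, Finset.mem_filter.mpr ⟨hq, ?_⟩, hqd⟩
      have : f (q.1 - q.2) = 1 := by rw [hqd]; exact hd1
      rw [map_sub] at this
      linear_combination (norm := ring_nf) this
    · intro q _; rfl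
  -- first projection is a bijection P₁ → T
  have hone : (1 : ZMod p) ≠ 0 := by
    haveI : Fact (1 < p) := ⟨hp.one_lt⟩
    exact one_ne_zero
  have hsumfst : ∑ q ∈ P₁, q.1 = ∑ x ∈ T, x := by
    refine Finset.sum_bij (fun q _ => q.1) ?_ ?_ ?_ ?_
    · intro q hq; exact (Finset.mem_offDiag.mp (hP₁off _ hq)).1
    · intro q₁ h₁ q₂ h₂ h
      obtain ⟨hm₁, he₁⟩ := Finset.mem_filter.mp h₁
      obtain ⟨hm₂, he₂⟩ := Finset.mem_filter.mp h₂
      obtain ⟨ha₁, hb₁, -⟩ := Finset.mem_offDiag.mp hm₁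
      obtain ⟨ha₂, hb₂, -⟩ := Finset.mem_offDiag.mp hm₂
      have h' : q₁.1 = q₂.1 := h
      have heq : f q₁.2 = f q₂.2 := by
        have e : f q₁.2 + 1 = f q₂.2 + 1 := by rw [← he₁, ← he₂, h']
        exact add_right_cancel e
      exact Prod.ext h' (hfinjT hb₁ hb₂ heq)
    · intro x hx
      obtain ⟨y, hy, hyx⟩ := hfsurj (f x - 1)
      refine ⟨(x, y), Finset.mem_filter.mpr ⟨Finset.mem_offDiag.mpr ⟨hx, hy, ?_⟩, ?_⟩, rfl⟩
      · intro hxy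
        have hxy2 : x = y := hxy
        rw [hxy2] at hyx
        apply hone
        linear_combination hyx
      · rw [hyx]; ring
    · intro q _; rfl
  -- second projection is a bijection P₁ → T
  have hsumsnd : ∑ q ∈ P₁, q.2 = ∑ x ∈ T, x := by
    refine Finset.sum_bij (fun q _ => q.2) ?_ ?_ ?_ ?_
    · intro q hq; exact (Finset.mem_offDiag.mp (hP₁off _ hq)).2.1
    · intro q₁ h₁ q₂ h₂ h
      obtain ⟨hm₁, he₁⟩ := Finset.mem_filter.mp h₁
      obtain ⟨hm₂, he₂⟩ := Finset.mem_filter.mp h₂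
      obtain ⟨ha₁, hb₁, -⟩ := Finset.mem_offDiag.mp hm₁
      obtain ⟨ha₂, hb₂, -⟩ := Finset.mem_offDiag.mp hm₂
      have h' : q₁.2 = q₂.2 := h
      have heq : f q₁.1 = f q₂.1 := by rw [he₁, he₂, h']
      exact Prod.ext (hfinjT ha₁ ha₂ heq) h'
    · intro y hy
      obtain ⟨x, hx, hxy⟩ := hfsurj (f y + 1)
      refine ⟨(x, y), Finset.mem_filter.mpr ⟨Finset.mem_offDiag.mpr ⟨hx, hy, ?_⟩, hxy⟩, rfl⟩
      intro hxy'
      have hxy2 : x = y := hxy'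
      rw [hxy2] at hxy
      apply hone
      linear_combination -hxy
    · intro q _; rfl
  -- hence the sum over U₁ is zero
  have hzero : ∑ d ∈ U₁, d = 0 := by
    rw [← hsum1, Finset.sum_sub_distrib, hsumfst, hsumsnd, sub_self]
  -- explicit description of U₁ via Fin p
  haveI hfact1 : Fact (1 < p) := ⟨hp.one_lt⟩
  have hcastlt : ∀ a b : ℕ, a < p ^ 2 → b < p ^ 2 → (a : ZMod (p ^ 2)) = b → a = b := by
    intro a b ha hb h
    have h2 := congrArg ZMod.val h
    rwa [ZMod.val_natCast, ZMod.val_natCast, Nat.mod_eq_of_lt ha, Nat.mod_eq_of_lt hb] at h2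
  have hlt2 : ∀ m : ℕ, m < p → p * m < p ^ 2 := by
    intro m hm
    rw [pow_two]
    exact (mul_lt_mul_iff_right₀ hp.pos).mpr hm
  have hsumU : ∑ d ∈ U₁, d
      = ∑ k : Fin p, ((1 : ZMod (p ^ 2)) + (p : ZMod (p ^ 2)) * ((k : ℕ) : ZMod (p ^ 2))) := by
    refine (Finset.sum_bij
      (fun (k : Fin p) _ => (1 : ZMod (p ^ 2)) + (p : ZMod (p ^ 2)) * ((k : ℕ) : ZMod (p ^ 2)))
      ?_ ?_ ?_ ?_).symm
    · intro k _
      simp only [hU₁_def, Finset.mem_filter, Finset.mem_univ, true_and]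
      rw [map_add, map_mul, map_one, map_natCast, map_natCast, ZMod.natCast_self, zero_mul,
        add_zero]
    · intro k₁ _ k₂ _ h
      have h2 : (p : ZMod (p ^ 2)) * ((k₁ : ℕ) : ZMod (p ^ 2))
          = (p : ZMod (p ^ 2)) * ((k₂ : ℕ) : ZMod (p ^ 2)) := add_left_cancel h
      have h3 : ((p * (k₁ : ℕ) : ℕ) : ZMod (p ^ 2)) = ((p * (k₂ : ℕ) : ℕ) : ZMod (p ^ 2)) := by
        push_cast
        exact h2
      have h4 : p * (k₁ : ℕ) = p * (k₂ : ℕ) :=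
        hcastlt _ _ (hlt2 _ k₁.is_lt) (hlt2 _ k₂.is_lt) h3
      exact Fin.ext (Nat.eq_of_mul_eq_mul_left hp.pos h4)
    · intro d hd
      have hd1 : f d = 1 := (Finset.mem_filter.mp hd).2
      have hv : d.val % p = 1 := by
        have h5 := hfval d
        rw [hd1] at h5
        have h6 := congrArg ZMod.val h5.symm
        rwa [ZMod.val_natCast, ZMod.val_one] at h6
      have hmlt : d.val / p < p := by
        apply Nat.div_lt_of_lt_mul
        rw [← pow_two]
        exact ZMod.val_lt d
      refine ⟨⟨d.val / p, hmlt⟩, Finset.mem_univ _, ?_⟩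
      have hval_eq : d.val = p * (d.val / p) + 1 := by
        have := Nat.div_add_mod d.val p
        omega
      have hdd : d = ((d.val : ℕ) : ZMod (p ^ 2)) := (ZMod.natCast_zmod_val d).symm
      conv_rhs => rw [hdd, hval_eq]
      push_cast
      ring
    · intro k _
      rfl
  -- the explicit sum equals p
  obtain ⟨j, hj⟩ := hodd
  have hgauss : p * (p * (p - 1) / 2) = p ^ 2 * j := by
    have h6 : p - 1 = 2 * j := by omega
    rw [h6, show p * (2 * j) = 2 * (p * j) by ring, Nat.mul_div_cancel_left _ two_pos]
    ring
  have hsum2 : ∑ k : Fin p, ((1 : ZMod (p ^ 2)) + (p : ZMod (p ^ 2)) * ((k : ℕ) : ZMod (p ^ 2)))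
      = (p : ZMod (p ^ 2)) := by
    rw [Finset.sum_add_distrib, Finset.sum_const, Finset.card_univ, Fintype.card_fin,
      nsmul_eq_mul, mul_one, ← Finset.mul_sum, ← Nat.cast_sum]
    have h7 : ∑ k : Fin p, (k : ℕ) = p * (p - 1) / 2 := by
      rw [Fin.sum_univ_eq_sum_range (fun i => i) p, Finset.sum_range_id]
    rw [h7, ← Nat.cast_mul, hgauss, Nat.cast_mul, ZMod.natCast_self, zero_mul, add_zero]
  -- contradiction
  have hp0 : (p : ZMod (p ^ 2)) = 0 := by
    rw [← hsum2, ← hsumU, hzero]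
  have hdvd : p ^ 2 ∣ p := (ZMod.natCast_eq_zero_iff _ _).mp hp0
  have hle := Nat.le_of_dvd hp.pos hdvd
  have h8 : p * p ≤ p := by rwa [pow_two] at hle
  nlinarith [hp.two_le]
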